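/- arXiv:2212.14717 — 5 statements merged into one kernel-verified Lean document; each statement's English description precedes it below -/
import Mathlib

section
/- If a binary vector x on the vertex set satisfies P(x)=0, where P(x) = Σ_{(v_i,v_j)} a_{ij}(1-δ_{c(v_i)c(v_j)}) x_i x_j, then the set S of vertices with x_i = 0 is a separation-node set, i.e., every connected component of the graph induced on V∖S is contained in a single community. -/
/-- The QUBO penalty term `P(x) = Σ_{i,j} a_{ij} (1 - δ_{c(v_i) c(v_j)}) x_i x_j`. -/
def sepPenalty {V C : Type*} [Fintype V] [DecidableEq C] (G : SimpleGraph V)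
    [DecidableRel G.Adj] (c : V → C) (x : V → ℕ) : ℕ :=
  ∑ i : V, ∑ j : V,
    (if G.Adj i j then 1 else 0) * (1 - (if c i = c j then 1 else 0)) * x i * x j

/-- `S` is a separation-node set: every connected component of the subgraph induced on
`V \ S` is contained in a single community. -/
def IsSepSet {V C : Type*} (G : SimpleGraph V) (c : V → C) (S : Set V) : Prop :=
  ∀ u v : ↥Sᶜ, (G.induce Sᶜ).Reachable u v → c u = c v

theorem stmt_0 {V C : Type*} [Fintype V] [DecidableEq C] (G : SimpleGraph V)
    [DecidableRel G.Adj] (c : V → C) (x : V → ℕ) (hx : ∀ v, x v = 0 ∨ x v = 1)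
    (hP : sepPenalty G c x = 0) :
    IsSepSet G c {v | x v = 0} := by
  have key : ∀ i j : V, G.Adj i j → x i = 1 → x j = 1 → c i = c j := by
    intro i j hadj hi hj
    by_contra hc
    have h0 : (if G.Adj i j then 1 else 0) * (1 - (if c i = c j then 1 else 0))
        * x i * x j = 0 := by
      have h1 := Finset.sum_eq_zero_iff.mp hP i (Finset.mem_univ i)
      exact Finset.sum_eq_zero_iff.mp h1 j (Finset.mem_univ j)
    rw [if_pos hadj, if_neg hc, hi, hj] at h0
    simp at h0
  intro u v hr
  obtain ⟨w⟩ := hr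
  induction w with
  | nil => rfl
  | cons h p ih =>
    rename_i a b d
    have hxa : x (a : V) = 1 := by
      rcases hx (a : V) with h' | h'
      · exact absurd h' a.2
      · exact h'
    have hxb : x (b : V) = 1 := by
      rcases hx (b : V) with h' | h'
      · exact absurd h' b.2
      · exact h'
    have : c (a : V) = c (b : V) := key _ _ h hxa hxb
    exact this.trans ih
end

section
/- A set S ⊆ V is a separation-node set if and only if its associated 0-flag vector x (with x_i = 0 iff v_i ∈ S) satisfies P(x) = 0. Equivalently, the set of all separation-node sets equals { {v_i : x_i = 0} : x ∈ {0,1}^{|V|}, P(x) = 0 }. -/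
/-- The QUBO objective `f(x) = 2 P(x) - Σ_i x_i` (valued in `ℤ`). -/
def sepObjective {V C : Type*} [Fintype V] [DecidableEq C] (G : SimpleGraph V)
    [DecidableRel G.Adj] (c : V → C) (x : V → ℕ) : ℤ :=
  2 * (sepPenalty G c x : ℤ) - ∑ v : V, (x v : ℤ)

/-- The 0-flag vector of a set `S`: `x_i = 0` iff `v_i ∈ S`. -/
def flagVec {V : Type*} [DecidableEq V] (S : Finset V) : V → ℕ :=
  fun v => if v ∈ S then 0 else 1

theorem stmt_1 {V C : Type*} [Fintype V] [DecidableEq V] [DecidableEq C]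
    (G : SimpleGraph V) [DecidableRel G.Adj] (c : V → C) :
    {S : Finset V | IsSepSet G c ↑S} =
      {S : Finset V | sepPenalty G c (flagVec S) = 0} := by
  ext S
  simp only [Set.mem_setOf_eq]
  constructor
  · intro hS
    unfold sepPenalty
    refine Finset.sum_eq_zero fun i _ => Finset.sum_eq_zero fun j _ => ?_
    by_cases hadj : G.Adj i j
    · by_cases hc : c i = c j
      · simp [hc]
      · by_cases hi : i ∈ S
        · simp [flagVec, hi]
        · by_cases hj : j ∈ S
          · simp [flagVec, hj]
          · exfalso
            have hi' : i ∈ (↑S : Set V)ᶜ := by simpa using hi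
            have hj' : j ∈ (↑S : Set V)ᶜ := by simpa using hj
            have hadj' : (G.induce (↑S : Set V)ᶜ).Adj ⟨i, hi'⟩ ⟨j, hj'⟩ := by
              simpa using hadj
            exact hc (hS ⟨i, hi'⟩ ⟨j, hj'⟩ hadj'.reachable)
    · simp [hadj]
  · intro hP
    have key : ∀ i j : V, G.Adj i j → i ∉ S → j ∉ S → c i = c j := by
      intro i j hadj hi hj
      by_contra hc
      have h0 : (if G.Adj i j then 1 else 0) * (1 - (if c i = c j then 1 else 0)) *
          flagVec S i * flagVec S j = 0 := by
        have := (Finset.sum_eq_zero_iff.mp hP) i (Finset.mem_univ i)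
        exact (Finset.sum_eq_zero_iff.mp this) j (Finset.mem_univ j)
      simp [flagVec, hadj, hc, hi, hj] at h0
    intro u v huv
    obtain ⟨w⟩ := huv
    induction w with
    | nil => rfl
    | cons h p ih =>
      rename_i a b d
      have : c (a : V) = c (b : V) := by
        have hab : G.Adj (a : V) (b : V) := by simpa using h
        exact key _ _ hab (fun h => a.2 (Finset.mem_coe.mpr h)) (fun h => b.2 (Finset.mem_coe.mpr h))
      exact this.trans ih
end

section
/- For every subset S ⊂ V whose 0-flag vector x satisfies P(x) > 0, there exists a strict superset S̃ ⊃ S whose 0-flag vector x̃ satisfies 2P(x̃) - Σ_i x̃_i < 2P(x) - Σ_i x_i; in fact, the objective value decreases by at least 1. -/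
theorem stmt_2 {V C : Type*} [Fintype V] [DecidableEq V] [DecidableEq C]
    (G : SimpleGraph V) [DecidableRel G.Adj] (c : V → C) (S : Finset V)
    (hP : 0 < sepPenalty G c (flagVec S)) :
    ∃ T : Finset V, S ⊂ T ∧
      sepObjective G c (flagVec T) ≤ sepObjective G c (flagVec S) - 1 := by
  classical
  set t : Finset V → V → V → ℕ := fun S' a b =>
    (if G.Adj a b then 1 else 0) * (1 - (if c a = c b then 1 else 0)) *
      flagVec S' a * flagVec S' b with ht
  have hpen : ∀ S' : Finset V,
      sepPenalty G c (flagVec S') = ∑ p ∈ Finset.univ ×ˢ Finset.univ, t S' p.1 p.2 := by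
    intro S'; rw [Finset.sum_product]; rfl
  have hP' : sepPenalty G c (flagVec S) ≠ 0 := hP.ne'
  rw [sepPenalty] at hP'
  obtain ⟨i, -, hi⟩ := Finset.exists_ne_zero_of_sum_ne_zero hP'
  obtain ⟨j, -, hj⟩ := Finset.exists_ne_zero_of_sum_ne_zero hi
  have hadj : G.Adj i j := by by_contra h; simp [h] at hj
  have hc : c i ≠ c j := by intro h; simp [h] at hj
  have hiS : i ∉ S := by intro h; simp [flagVec, h] at hj
  have hjS : j ∉ S := by intro h; simp [flagVec, h] at hj
  have hij : i ≠ j := hadj.ne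
  set T := insert i S with hT
  have hST : S ⊂ T := Finset.ssubset_insert hiS
  have hflag_le : ∀ v, flagVec T v ≤ flagVec S v := by
    intro v
    unfold flagVec
    by_cases h2 : v ∈ S
    · simp [hT, Finset.mem_insert_of_mem h2, h2]
    · split_ifs <;> simp
  have hmono : ∀ a b, t T a b ≤ t S a b := by
    intro a b
    simp only [ht]
    gcongr <;> [exact hflag_le a; exact hflag_le b]
  set A : Finset (V × V) := {(i, j), (j, i)} with hA
  have hAP : A ⊆ Finset.univ ×ˢ Finset.univ := by
    intro p _; simp
  have hpairne : ((i, j) : V × V) ≠ (j, i) := by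
    simp [Prod.ext_iff, hij]
  have hflagTi : flagVec T i = 0 := by simp [flagVec, hT]
  have htT : ∀ p ∈ A, t T p.1 p.2 = 0 := by
    intro p hp
    simp only [hA, Finset.mem_insert, Finset.mem_singleton] at hp
    rcases hp with h | h <;> subst h <;> simp [ht, hflagTi]
  have htSij : t S i j = 1 := by
    simp [ht, flagVec, hadj, hc, hiS, hjS]
  have htSji : t S j i = 1 := by
    simp [ht, flagVec, hadj.symm, Ne.symm hc, hiS, hjS]
  have hAsumS : ∑ p ∈ A, t S p.1 p.2 = 2 := by
    rw [hA, Finset.sum_pair hpairne]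
    simp [htSij, htSji]
  have hAsumT : ∑ p ∈ A, t T p.1 p.2 = 0 := Finset.sum_eq_zero htT
  have hsplit : ∀ S' : Finset V,
      sepPenalty G c (flagVec S') =
        ∑ p ∈ Finset.univ ×ˢ Finset.univ \ A, t S' p.1 p.2 + ∑ p ∈ A, t S' p.1 p.2 := by
    intro S'; rw [hpen, Finset.sum_sdiff hAP]
  have hkey : sepPenalty G c (flagVec T) + 2 ≤ sepPenalty G c (flagVec S) := by
    rw [hsplit T, hsplit S, hAsumS, hAsumT, add_zero]
    have : ∑ p ∈ Finset.univ ×ˢ Finset.univ \ A, t T p.1 p.2 ≤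
        ∑ p ∈ Finset.univ ×ˢ Finset.univ \ A, t S p.1 p.2 :=
      Finset.sum_le_sum fun p _ => hmono p.1 p.2
    omega
  have hsum : ∑ v : V, (flagVec S v : ℤ) = ∑ v : V, (flagVec T v : ℤ) + 1 := by
    have h1 : ∀ v : V, (flagVec S v : ℤ) =
        (flagVec T v : ℤ) + (if v = i then 1 else 0) := by
      intro v
      by_cases hv : v = i
      · subst hv; simp [flagVec, hT, hiS]
      · simp [flagVec, hT, Finset.mem_insert, hv]
    rw [Finset.sum_congr rfl fun v _ => h1 v, Finset.sum_add_distrib,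
      Finset.sum_ite_eq' Finset.univ i (fun _ => (1 : ℤ))]
    simp
  refine ⟨T, hST, ?_⟩
  unfold sepObjective
  have hkeyZ : (sepPenalty G c (flagVec T) : ℤ) + 2 ≤ (sepPenalty G c (flagVec S) : ℤ) := by
    exact_mod_cast hkey
  linarith [hsum]
end

section
/- The set of minimum-cardinality separation-node sets equals the set of vertex sets { v_i : x_i = 0 } ranging over minimizers x of the objective f(x) = 2P(x) - Σ_{v_i∈V} x_i over {0,1}^{|V|}. -/
section Aux
variable {V C : Type*} [Fintype V] [DecidableEq V] [DecidableEq C]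
    (G : SimpleGraph V) [DecidableRel G.Adj] (c : V → C)

def termZ (x : V → ℕ) (a b : V) : ℤ :=
  (if G.Adj a b then 1 else 0) * (if c a = c b then 0 else 1) * x a * x b

lemma penalty_cast (x : V → ℕ) :
    (sepPenalty G c x : ℤ) = ∑ a : V, ∑ b : V, termZ G c x a b := by
  have h : ∀ a b : V, (1 - (if c a = c b then 1 else 0) : ℕ) = if c a = c b then 0 else 1 := by
    intro a b; split <;> rfl
  simp only [sepPenalty, h, termZ]
  push_cast
  rfl

lemma termZ_nonneg (x : V → ℕ) (a b : V) : 0 ≤ termZ G c x a b := by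
  unfold termZ; split_ifs <;> positivity

lemma termZ_mono {x y : V → ℕ} (h : ∀ v, x v ≤ y v) (a b : V) :
    termZ G c x a b ≤ termZ G c y a b := by
  unfold termZ
  have ha : (x a : ℤ) ≤ y a := by exact_mod_cast h a
  have hb : (x b : ℤ) ≤ y b := by exact_mod_cast h b
  have hk : (0:ℤ) ≤ (if G.Adj a b then 1 else 0) * (if c a = c b then 0 else 1) := by
    split_ifs <;> norm_num
  calc (if G.Adj a b then (1:ℤ) else 0) * (if c a = c b then 0 else 1) * x a * x b
      ≤ (if G.Adj a b then (1:ℤ) else 0) * (if c a = c b then 0 else 1) * y a * y b := by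
        apply mul_le_mul _ hb (by positivity) _
        · exact mul_le_mul_of_nonneg_left ha hk
        · positivity

lemma sum_eq (y : V → ℕ) (hy : ∀ v, y v = 0 ∨ y v = 1) :
    (∑ v, (y v : ℤ)) = Fintype.card V - (Finset.univ.filter fun v => y v = 0).card := by
  have h1 : ∀ v : V, (y v : ℤ) = 1 - (if y v = 0 then 1 else 0) := by
    intro v; rcases hy v with h | h <;> simp [h]
  rw [Finset.sum_congr rfl fun v _ => h1 v, Finset.sum_sub_distrib,
    Finset.sum_boole, Finset.sum_const, Finset.card_univ]
  simp

lemma sep_of_no_bad (S : Set V)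
    (h : ∀ a b : V, G.Adj a b → a ∉ S → b ∉ S → c a = c b) :
    IsSepSet G c S := by
  rintro u v ⟨w⟩
  induction w with
  | nil => rfl
  | @cons p q r hpq w ih =>
      exact (h p q hpq p.2 q.2).trans ih

lemma exists_bad (x : V → ℕ) (hx : ∀ v, x v = 0 ∨ x v = 1)
    (hns : ¬ IsSepSet G c (↑(Finset.univ.filter fun v => x v = 0) : Set V)) :
    ∃ a b : V, G.Adj a b ∧ c a ≠ c b ∧ x a = 1 ∧ x b = 1 := by
  by_contra hbad
  push_neg at hbad
  apply hns
  apply sep_of_no_bad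
  intro a b hadj ha hb
  have ha' : x a = 1 := by
    rcases hx a with h | h
    · exact absurd (by simp [h]) ha
    · exact h
  have hb' : x b = 1 := by
    rcases hx b with h | h
    · exact absurd (by simp [h]) hb
    · exact h
  by_contra hcc
  exact hbad a b hadj hcc ha' hb' 

lemma penalty_zero (x : V → ℕ)
    (hsep : IsSepSet G c (↑(Finset.univ.filter fun v => x v = 0) : Set V)) :
    sepPenalty G c x = 0 := by
  apply Finset.sum_eq_zero; intro i _
  apply Finset.sum_eq_zero; intro j _
  by_cases h1 : G.Adj i j
  · by_cases h2 : x i = 0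
    · simp [h2]
    · by_cases h3 : x j = 0
      · simp [h3]
      · have hmem : ∀ v : V, x v ≠ 0 →
            v ∈ (↑(Finset.univ.filter fun w => x w = 0) : Set V)ᶜ := by
          intro v hv; simp [hv]
        have hcc : c i = c j :=
          hsep ⟨i, hmem i h2⟩ ⟨j, hmem j h3⟩ (SimpleGraph.Adj.reachable h1)
        simp [hcc]
  · simp [h1]

lemma step (x : V → ℕ) {a b : V}
    (hadj : G.Adj a b) (hc : c a ≠ c b) (ha : x a = 1) (hb : x b = 1) :
    sepObjective G c (Function.update x a 0) + 1 ≤ sepObjective G c x := by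
  set y := Function.update x a 0 with hy
  have hle : ∀ v, y v ≤ x v := by
    intro v
    by_cases h : v = a
    · subst h; simp [hy]
    · simp [hy, Function.update_of_ne h]
  have hsum : (∑ v, (x v : ℤ)) = (∑ v, (y v : ℤ)) + 1 := by
    have h1 : ∑ v, x v = x a + ∑ v ∈ Finset.univ.erase a, x v :=
      (Finset.add_sum_erase _ _ (Finset.mem_univ a)).symm
    have h2 : ∑ v, y v = y a + ∑ v ∈ Finset.univ.erase a, y v :=
      (Finset.add_sum_erase _ _ (Finset.mem_univ a)).symm
    have h3 : ∑ v ∈ Finset.univ.erase a, y v = ∑ v ∈ Finset.univ.erase a, x v := by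
      apply Finset.sum_congr rfl
      intro v hv
      simp [hy, Function.update_of_ne (Finset.ne_of_mem_erase hv)]
    have hya : y a = 0 := by simp [hy]
    have : ∑ v, x v = (∑ v, y v) + 1 := by omega
    exact_mod_cast this
  have hP : (sepPenalty G c y : ℤ) + 1 ≤ (sepPenalty G c x : ℤ) := by
    rw [penalty_cast, penalty_cast]
    rw [← Finset.sum_product' (f := fun a' b' => termZ G c y a' b'),
        ← Finset.sum_product' (f := fun a' b' => termZ G c x a' b')]
    have key : ∀ p ∈ (Finset.univ ×ˢ Finset.univ : Finset (V × V)),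
        (0:ℤ) ≤ termZ G c x p.1 p.2 - termZ G c y p.1 p.2 :=
      fun p _ => sub_nonneg.mpr (termZ_mono G c hle p.1 p.2)
    have hsingle := Finset.single_le_sum key (Finset.mem_product.mpr
      ⟨Finset.mem_univ a, Finset.mem_univ b⟩ : (a, b) ∈ Finset.univ ×ˢ Finset.univ)
    have htx : termZ G c x a b = 1 := by
      simp [termZ, if_pos hadj, if_neg hc, ha, hb]
    have hty : termZ G c y a b = 0 := by
      simp [termZ, hy]
    rw [Finset.sum_sub_distrib] at hsingle
    simp only [htx, hty] at hsingle
    linarith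
  simp only [sepObjective]
  linarith

lemma objective_flag (T : Finset V) (hT : IsSepSet G c ↑T) :
    sepObjective G c (flagVec T) = T.card - Fintype.card V := by
  have hfilter : (Finset.univ.filter fun v => flagVec T v = 0) = T := by
    ext v; by_cases h : v ∈ T <;> simp [flagVec, h]
  have h01 : ∀ v, flagVec T v = 0 ∨ flagVec T v = 1 := by
    intro v; unfold flagVec; split <;> simp
  have hP : sepPenalty G c (flagVec T) = 0 := by
    apply penalty_zero
    rw [hfilter]; exact hT
  rw [sepObjective, hP, sum_eq (flagVec T) h01, hfilter]
  push_cast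
  ring

lemma lowerBound (S : Finset V)
    (hmin : ∀ T : Finset V, IsSepSet G c ↑T → S.card ≤ T.card) :
    ∀ y : V → ℕ, (∀ v, y v = 0 ∨ y v = 1) →
      (S.card : ℤ) - Fintype.card V ≤ sepObjective G c y := by
  suffices h : ∀ n, ∀ y : V → ℕ, (∀ v, y v = 0 ∨ y v = 1) → ∑ v, y v = n →
      (S.card : ℤ) - Fintype.card V ≤ sepObjective G c y by
    intro y hy; exact h _ y hy rfl
  intro n
  induction n using Nat.strong_induction_on with
  | _ n ih =>
    intro y hy hn
    by_cases hsep : IsSepSet G c (↑(Finset.univ.filter fun v => y v = 0) : Set V)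
    · have h1 := hmin _ hsep
      have h2 : (0:ℤ) ≤ sepPenalty G c y := by positivity
      have h3 := sum_eq (V := V) y hy
      have h4 : ((Finset.univ.filter fun v => y v = 0).card : ℤ) ≤ Fintype.card V := by
        exact_mod_cast Finset.card_le_card (Finset.filter_subset _ _) |>.trans_eq
          (Finset.card_univ)
      rw [sepObjective, h3]
      have h5 : (S.card : ℤ) ≤ (Finset.univ.filter fun v => y v = 0).card := by
        exact_mod_cast h1
      linarith
    · obtain ⟨a, b, hadj, hc, ha, hb⟩ := exists_bad G c y hy hsep
      set y' := Function.update y a 0 with hy'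
      have hy'01 : ∀ v, y' v = 0 ∨ y' v = 1 := by
        intro v
        by_cases h : v = a
        · subst h; left; simp [hy']
        · rw [hy', Function.update_of_ne h]; exact hy v
      have hlt : ∑ v, y' v < n := by
        rw [← hn]
        apply Finset.sum_lt_sum
        · intro v _
          by_cases hva : v = a
          · subst hva; simp [hy']
          · rw [hy', Function.update_of_ne hva]
        · exact ⟨a, Finset.mem_univ a, by simp [hy', ha]⟩
      have := ih _ hlt y' hy'01 rfl
      have hstep := step G c y hadj hc ha hb
      rw [← hy'] at hstep
      linarith

end Aux

theorem stmt_4 {V C : Type*} [Fintype V] [DecidableEq V] [DecidableEq C]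
    (G : SimpleGraph V) [DecidableRel G.Adj] (c : V → C) :
    {S : Finset V | IsSepSet G c ↑S ∧
        ∀ T : Finset V, IsSepSet G c ↑T → S.card ≤ T.card} =
      {S : Finset V | ∃ x : V → ℕ, (∀ v, x v = 0 ∨ x v = 1) ∧
        (∀ y : V → ℕ, (∀ v, y v = 0 ∨ y v = 1) →
          sepObjective G c x ≤ sepObjective G c y) ∧
        S = Finset.univ.filter (fun v => x v = 0)} := by
  ext S
  simp only [Set.mem_setOf_eq]
  constructor
  · rintro ⟨hS, hmin⟩
    have hfilter : (Finset.univ.filter fun v => flagVec S v = 0) = S := by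
      ext v; by_cases h : v ∈ S <;> simp [flagVec, h]
    refine ⟨flagVec S, fun v => ?_, fun y hy => ?_, hfilter.symm⟩
    · unfold flagVec; split <;> simp
    · rw [objective_flag G c S hS]
      exact lowerBound G c S hmin y hy
  · rintro ⟨x, hx, hmin, rfl⟩
    set S := Finset.univ.filter fun v => x v = 0 with hS
    have hsep : IsSepSet G c ↑S := by
      by_contra hns
      obtain ⟨a, b, hadj, hc, ha, hb⟩ := exists_bad G c x hx hns
      have hstep := step G c x hadj hc ha hb
      have hupd : ∀ v, Function.update x a 0 v = 0 ∨ Function.update x a 0 v = 1 := by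
        intro v
        by_cases h : v = a
        · subst h; left; simp
        · rw [Function.update_of_ne h]; exact hx v
      have := hmin _ hupd
      linarith
    refine ⟨hsep, fun T hT => ?_⟩
    have h1 : sepObjective G c x = S.card - Fintype.card V := by
      rw [sepObjective, penalty_zero G c x hsep, sum_eq x hx, ← hS]
      push_cast
      ring
    have h2 := objective_flag G c T hT
    have h01 : ∀ v, flagVec T v = 0 ∨ flagVec T v = 1 := by
      intro v; unfold flagVec; split <;> simp
    have h3 := hmin (flagVec T) h01
    rw [h1, h2] at h3
    have h4 : (S.card : ℤ) ≤ T.card := by linarith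
    exact_mod_cast h4
end

section
/- For the Max-Clique QUBO on a graph G=(V,E): minimizers x of 2·Σ_{(v_i,v_j)∈V², i≠j}(1 - a_{ij}) x_i x_j - Σ_i x_i over {0,1}^{|V|} correspond exactly to maximum cliques of G, i.e., x is a minimizer iff {v_i : x_i = 1} is a clique of maximum cardinality. -/
/-- The Max-Clique QUBO objective
`2 Σ_{i ≠ j} (1 - a_{ij}) x_i x_j - Σ_i x_i` (valued in `ℤ`). -/
def cliqueObjective {V : Type*} [Fintype V] [DecidableEq V] (G : SimpleGraph V)
    [DecidableRel G.Adj] (x : V → ℕ) : ℤ :=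
  2 * ∑ i : V, ∑ j : V,
      (if i ≠ j then (1 - (if G.Adj i j then (1 : ℤ) else 0)) * x i * x j else 0) -
    ∑ i : V, (x i : ℤ)

open Finset

/-- Penalty: number of ordered non-adjacent distinct pairs inside `S`. -/
def pen {V : Type*} [DecidableEq V] (G : SimpleGraph V) [DecidableRel G.Adj]
    (S : Finset V) : ℤ :=
  ∑ i ∈ S, ∑ j ∈ S, if i ≠ j ∧ ¬ G.Adj i j then 1 else 0

/-- Objective as a function of the support set. -/
def Fobj {V : Type*} [DecidableEq V] (G : SimpleGraph V) [DecidableRel G.Adj]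
    (S : Finset V) : ℤ :=
  2 * pen G S - S.card

lemma pen_clique {V : Type*} [DecidableEq V] (G : SimpleGraph V) [DecidableRel G.Adj]
    {S : Finset V} (h : G.IsClique (↑S : Set V)) : pen G S = 0 := by
  apply Finset.sum_eq_zero
  intro i hi
  apply Finset.sum_eq_zero
  intro j hj
  rw [if_neg]
  rintro ⟨hij, hadj⟩
  exact hadj (h (Finset.mem_coe.mpr hi) (Finset.mem_coe.mpr hj) hij)

lemma obj_eq {V : Type*} [Fintype V] [DecidableEq V] (G : SimpleGraph V)
    [DecidableRel G.Adj] (x : V → ℕ) (hx : ∀ v, x v = 0 ∨ x v = 1) :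
    cliqueObjective G x = Fobj G (Finset.univ.filter (fun v => x v = 1)) := by
  set S := Finset.univ.filter (fun v => x v = 1) with hS
  have h1 : ∑ i : V, (x i : ℤ) = (S.card : ℤ) := by
    rw [Finset.card_eq_sum_ones S, hS, Finset.sum_filter]
    push_cast
    apply Finset.sum_congr rfl
    intro i _
    rcases hx i with h | h <;> simp [h]
  have h2 : ∀ i j : V,
      (if i ≠ j then (1 - (if G.Adj i j then (1:ℤ) else 0)) * x i * x j else 0)
      = if i ∈ S then (if j ∈ S then (if i ≠ j ∧ ¬ G.Adj i j then (1:ℤ) else 0) else 0) else 0 := by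
    intro i j
    have hi' : i ∈ S ↔ x i = 1 := by simp [hS]
    have hj' : j ∈ S ↔ x j = 1 := by simp [hS]
    rcases hx i with hxi | hxi <;> rcases hx j with hxj | hxj <;>
      by_cases hij : i = j <;> by_cases ha : G.Adj i j <;>
      simp [hi', hj', hxi, hxj, hij, ha]
  unfold cliqueObjective Fobj pen
  rw [h1]
  congr 1
  congr 1
  rw [Finset.sum_congr rfl (fun i _ => Finset.sum_congr rfl (fun j _ => h2 i j))]
  simp [Finset.sum_ite_mem, Finset.univ_inter]

lemma filter_indicator {V : Type*} [Fintype V] [DecidableEq V] (A : Finset V) :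
    Finset.univ.filter (fun v => (if v ∈ A then (1:ℕ) else 0) = 1) = A := by
  ext v
  by_cases h : v ∈ A <;> simp [h]

lemma pen_erase {V : Type*} [DecidableEq V] (G : SimpleGraph V) [DecidableRel G.Adj]
    {S : Finset V} {u v : V} (hu : u ∈ S) (hv : v ∈ S) (huv : u ≠ v)
    (hadj : ¬ G.Adj u v) : pen G (S.erase u) + 2 ≤ pen G S := by
  classical
  set t : V → V → ℤ := fun i j => if i ≠ j ∧ ¬ G.Adj i j then 1 else 0 with ht
  have tnn : ∀ i j, 0 ≤ t i j := by intro i j; simp only [ht]; split_ifs <;> norm_num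
  have hsplit : pen G S = (∑ j ∈ S, t u j) + ∑ i ∈ S.erase u, ∑ j ∈ S, t i j := by
    rw [pen, ← Finset.add_sum_erase S _ hu]
  have hsplit2 : ∀ i, ∑ j ∈ S, t i j = t i u + ∑ j ∈ S.erase u, t i j := by
    intro i; rw [← Finset.add_sum_erase S _ hu]
  have hA : (1:ℤ) ≤ ∑ j ∈ S, t u j := by
    have : t u v = 1 := by simp [ht, huv, hadj]
    calc (1:ℤ) = t u v := this.symm
      _ ≤ ∑ j ∈ S, t u j := Finset.single_le_sum (fun j _ => tnn u j) hv
  have hv' : v ∈ S.erase u := Finset.mem_erase.mpr ⟨huv.symm, hv⟩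
  have hB : (1:ℤ) ≤ ∑ i ∈ S.erase u, t i u := by
    have hadj' : ¬ G.Adj v u := fun h => hadj h.symm
    have : t v u = 1 := by simp [ht, huv.symm, hadj']
    calc (1:ℤ) = t v u := this.symm
      _ ≤ ∑ i ∈ S.erase u, t i u := Finset.single_le_sum (fun i _ => tnn i u) hv'
  have hsum : ∑ i ∈ S.erase u, ∑ j ∈ S, t i j
      = (∑ i ∈ S.erase u, t i u) + ∑ i ∈ S.erase u, ∑ j ∈ S.erase u, t i j := by
    rw [← Finset.sum_add_distrib]
    exact Finset.sum_congr rfl (fun i _ => hsplit2 i)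
  have : pen G S = (∑ j ∈ S, t u j) + (∑ i ∈ S.erase u, t i u) + pen G (S.erase u) := by
    rw [hsplit, hsum, pen]; ring
  linarith

lemma card_erase_int {V : Type*} [DecidableEq V] {S : Finset V} {u : V} (hu : u ∈ S) :
    ((S.erase u).card : ℤ) = (S.card : ℤ) - 1 := by
  rw [Finset.card_erase_of_mem hu]
  have h1 : 1 ≤ S.card := Finset.one_le_card.mpr ⟨u, hu⟩
  push_cast [Nat.cast_sub h1]
  ring

lemma not_clique_exists {V : Type*} [DecidableEq V] (G : SimpleGraph V)
    {S : Finset V} (h : ¬ G.IsClique (↑S : Set V)) :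
    ∃ u ∈ S, ∃ v ∈ S, u ≠ v ∧ ¬ G.Adj u v := by
  rw [SimpleGraph.isClique_iff, Set.Pairwise] at h
  push_neg at h
  obtain ⟨u, hu, v, hv, huv, hadj⟩ := h
  exact ⟨u, hu, v, hv, huv, hadj⟩

lemma Fobj_ge {V : Type*} [DecidableEq V] (G : SimpleGraph V) [DecidableRel G.Adj]
    (c : ℤ) (hc : ∀ T : Finset V, G.IsClique (↑T : Set V) → (T.card : ℤ) ≤ c)
    (S : Finset V) : -c ≤ Fobj G S := by
  induction S using Finset.strongInduction with
  | _ S ih =>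
    by_cases hcl : G.IsClique (↑S : Set V)
    · have h1 := hc S hcl
      have h2 := pen_clique G hcl
      rw [Fobj, h2]
      linarith
    · obtain ⟨u, hu, v, hv, huv, hadj⟩ := not_clique_exists G hcl
      have h1 := pen_erase G hu hv huv hadj
      have h2 := ih (S.erase u) (Finset.erase_ssubset hu)
      have h3 := card_erase_int hu
      rw [Fobj] at h2 ⊢
      linarith

theorem stmt_14 {V : Type*} [Fintype V] [DecidableEq V] (G : SimpleGraph V)
    [DecidableRel G.Adj] (x : V → ℕ) (hx : ∀ v, x v = 0 ∨ x v = 1) :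
    (∀ y : V → ℕ, (∀ v, y v = 0 ∨ y v = 1) →
        cliqueObjective G x ≤ cliqueObjective G y) ↔
      (G.IsClique {v : V | x v = 1} ∧
        ∀ T : Finset V, G.IsClique ↑T →
          T.card ≤ (Finset.univ.filter (fun v => x v = 1)).card) := by
  classical
  set S := Finset.univ.filter (fun v => x v = 1) with hS
  have hcoe : ({v : V | x v = 1} : Set V) = ↑S := by ext v; simp [hS]
  have hox : cliqueObjective G x = Fobj G S := obj_eq G x hx
  have objInd : ∀ A : Finset V,
      cliqueObjective G (fun w => if w ∈ A then 1 else 0) = Fobj G A := by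
    intro A
    have hy01 : ∀ w, (if w ∈ A then (1:ℕ) else 0) = 0 ∨ (if w ∈ A then (1:ℕ) else 0) = 1 := by
      intro w; split_ifs <;> simp
    rw [obj_eq G _ hy01, filter_indicator]
  constructor
  · intro h
    have hcl : G.IsClique (↑S : Set V) := by
      by_contra hnc
      obtain ⟨u, hu, v, hv, huv, hadj⟩ := not_clique_exists G hnc
      have hy01 : ∀ w, (if w ∈ S.erase u then (1:ℕ) else 0) = 0 ∨
          (if w ∈ S.erase u then (1:ℕ) else 0) = 1 := by
        intro w; split_ifs <;> simp
      have hle := h _ hy01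
      rw [hox, objInd] at hle
      have h1 := pen_erase G hu hv huv hadj
      have h3 := card_erase_int hu
      rw [Fobj, Fobj] at hle
      linarith
    refine ⟨by rw [hcoe]; exact hcl, ?_⟩
    intro T hT
    have hy01 : ∀ w, (if w ∈ T then (1:ℕ) else 0) = 0 ∨ (if w ∈ T then (1:ℕ) else 0) = 1 := by
      intro w; split_ifs <;> simp
    have hle := h _ hy01
    rw [hox, objInd, Fobj, Fobj, pen_clique G hcl, pen_clique G hT] at hle
    have : (T.card : ℤ) ≤ (S.card : ℤ) := by linarith
    exact_mod_cast this
  · rintro ⟨hcl, hmax⟩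
    intro y hy01
    have hclS : G.IsClique (↑S : Set V) := hcoe ▸ hcl
    have hoy := obj_eq G y hy01
    have hge := Fobj_ge G (S.card : ℤ)
      (fun T hT => by exact_mod_cast hmax T hT) (Finset.univ.filter (fun v => y v = 1))
    rw [hox, hoy, Fobj, pen_clique G hclS]
    linarith
end
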